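/- A cyclic code of odd length n over ℤ/4, viewed as an ideal I = ⟨f(x)h(x), 2f(x)g(x)⟩ of (ℤ/4)[x]/(xⁿ-1) where xⁿ-1 = f(x)g(x)h(x) is a factorization into monic polynomials, satisfies |I| = 4^{deg g}·2^{deg h}. -/

import Mathlib

open Polynomial

def phi4 : ZMod 4 →+* ZMod 2 := ZMod.castHom (show 2 ∣ 4 by norm_num) (ZMod 2)

lemma coeff_setsum {R : Type*} [Semiring R] (s : Finset ℕ) (b : ℕ → R) (j : ℕ) :
    (∑ i ∈ s, C (b i) * X ^ i).coeff j = if j ∈ s then b j else 0 := by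
  rw [Polynomial.finset_sum_coeff]
  simp only [Polynomial.coeff_C_mul, Polynomial.coeff_X_pow, mul_ite, mul_one, mul_zero]
  rw [← Finset.sum_ite_eq' s j b]
  congr 1; ext i; simp [eq_comm]

lemma coeff_finsum {R : Type*} [Semiring R] {d : ℕ} (b : Fin d → R) (j : ℕ) :
    (∑ i : Fin d, C (b i) * X ^ (i : ℕ)).coeff j = if hj : j < d then b ⟨j, hj⟩ else 0 := by
  rw [Polynomial.finset_sum_coeff]
  simp only [Polynomial.coeff_C_mul, Polynomial.coeff_X_pow, mul_ite, mul_one, mul_zero]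
  split
  · next hj =>
      rw [Finset.sum_eq_single (⟨j, hj⟩ : Fin d)]
      · simp
      · intro i _ hne
        rw [if_neg]
        intro hij
        exact hne (Fin.ext hij.symm)
      · simp
  · next hj =>
      apply Finset.sum_eq_zero; intro i _
      rw [if_neg]; intro hij; exact hj (hij ▸ i.isLt)

lemma finsum_mem_degreeLT {R : Type*} [CommRing R] {d : ℕ} (b : Fin d → R) :
    (∑ i : Fin d, C (b i) * X ^ (i : ℕ)) ∈ degreeLT R d := by
  apply Submodule.sum_mem
  intro i _
  rw [mem_degreeLT]
  exact lt_of_le_of_lt (degree_C_mul_X_pow_le _ _) (by exact_mod_cast i.isLt)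

lemma halve (p : (ZMod 4)[X]) (hp : p.map phi4 = 0) :
    ∃ q : (ZMod 4)[X], p = 2 * q ∧ q.degree ≤ p.degree := by
  have hc : ∀ j, phi4 (p.coeff j) = 0 := by
    intro j
    have := congrArg (fun r => Polynomial.coeff r j) hp
    simpa [Polynomial.coeff_map] using this
  refine ⟨∑ i ∈ p.support, C ((((p.coeff i).val / 2 : ℕ)) : ZMod 4) * X ^ i, ?_, ?_⟩
  · ext j
    rw [show (2 : (ZMod 4)[X]) = C 2 from (map_ofNat C 2).symm, Polynomial.coeff_C_mul, coeff_setsum]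
    split
    · next hj => exact ((by decide : ∀ x : ZMod 4, phi4 x = 0 → 2 * ((x.val / 2 : ℕ) : ZMod 4) = x) _ (hc j)).symm
    · next hj =>
        rw [Polynomial.notMem_support_iff.mp hj, mul_zero]
  · rw [Polynomial.degree_le_iff_coeff_zero]
    intro m hm
    rw [coeff_setsum, if_neg]
    exact fun hmem => absurd (Polynomial.le_degree_of_mem_supp m hmem) (not_le.mpr hm)

lemma two_mul_poly_zero (p : (ZMod 4)[X]) (hp : 2 * p = 0) : p.map phi4 = 0 := by
  ext j
  rw [Polynomial.coeff_map, Polynomial.coeff_zero]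
  have := congrArg (fun r => Polynomial.coeff r j) hp
  simp only [Polynomial.coeff_zero] at this
  rw [show (2 : (ZMod 4)[X]) = C 2 from (map_ofNat C 2).symm, Polynomial.coeff_C_mul] at this
  exact (by decide : ∀ x : ZMod 4, 2 * x = 0 → phi4 x = 0) _ this

lemma four_zero : (2 : (ZMod 4)[X]) * 2 = 0 := by
  rw [show (2 : (ZMod 4)[X]) = C 2 from (map_ofNat C 2).symm, ← Polynomial.C_mul]
  norm_num
  rfl

lemma key_lemma (n : ℕ) (hn : Odd n)
    (f g h : Polynomial (ZMod 4)) (hf : f.Monic) (hg : g.Monic) (hh : h.Monic)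
    (hfac : f * g * h = X ^ n - 1)
    (a w c : (ZMod 4)[X]) (ha : a.degree < (g.natDegree : WithBot ℕ))
    (hw : w.degree < (h.natDegree : WithBot ℕ)) (hwphi : w.map phi4 = 0)
    (heq : f * h * a + f * g * w = (X ^ n - 1) * c) : a = 0 ∧ w = 0 := by
  haveI : Nontrivial (ZMod 4) := ⟨0, 1, by decide⟩
  have hF0 : f.map phi4 ≠ 0 := (hf.map phi4).ne_zero
  have hG0 : g.map phi4 ≠ 0 := (hg.map phi4).ne_zero
  have hH0 : h.map phi4 ≠ 0 := (hh.map phi4).ne_zero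
  have hGdeg : (g.map phi4).degree = (g.natDegree : WithBot ℕ) := by
    rw [hg.degree_map phi4, Polynomial.degree_eq_natDegree hg.ne_zero]
  have hHdeg : (h.map phi4).degree = (h.natDegree : WithBot ℕ) := by
    rw [hh.degree_map phi4, Polynomial.degree_eq_natDegree hh.ne_zero]
  have hFGH : f.map phi4 * g.map phi4 * h.map phi4 = X ^ n - 1 := by
    rw [← Polynomial.map_mul, ← Polynomial.map_mul, hfac]
    simp [Polynomial.map_sub, Polynomial.map_pow]
  have hsep : (X ^ n - 1 : (ZMod 2)[X]).Separable := by
    have hn2 : (n : ZMod 2) ≠ 0 := by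
      rw [Ne, ZMod.natCast_eq_zero_iff]
      exact fun hdvd => (Nat.not_even_iff_odd.mpr hn) (even_iff_two_dvd.mpr hdvd)
    simpa using Polynomial.separable_X_pow_sub_C (1 : ZMod 2) hn2 one_ne_zero
  have hcop : IsCoprime (g.map phi4) (h.map phi4) := by
    apply Polynomial.Separable.isCoprime
    apply Polynomial.Separable.of_mul_right (f := f.map phi4)
    rw [← mul_assoc, hFGH]
    exact hsep
  -- Step 1 : a maps to 0 mod 2
  have heq2 : f.map phi4 * h.map phi4 * (a.map phi4)
      = f.map phi4 * g.map phi4 * h.map phi4 * (c.map phi4) := by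
    rw [hFGH]
    have := congrArg (Polynomial.map phi4) heq
    simpa [Polynomial.map_add, Polynomial.map_mul, Polynomial.map_sub,
      Polynomial.map_pow, hwphi] using this
  have hA : a.map phi4 = 0 := by
    apply Polynomial.eq_zero_of_dvd_of_degree_lt (p := g.map phi4)
    · refine ⟨c.map phi4, ?_⟩
      have e : f.map phi4 * (h.map phi4 * (a.map phi4))
          = f.map phi4 * (h.map phi4 * (g.map phi4 * (c.map phi4))) := by
        linear_combination heq2
      have e2 := mul_left_cancel₀ hF0 e
      exact mul_left_cancel₀ hH0 e2
    · calc (a.map phi4).degree ≤ a.degree := Polynomial.degree_map_le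
        _ < (g.natDegree : WithBot ℕ) := ha
        _ = (g.map phi4).degree := hGdeg.symm
  obtain ⟨a₁, ha₁, ha₁d⟩ := halve a hA
  obtain ⟨w₁, hw₁, hw₁d⟩ := halve w hwphi
  have heq3 : 2 * (f * h * a₁ + f * g * w₁) = f * g * h * c := by
    rw [hfac, ← heq, ha₁, hw₁]; ring
  have h20 : (2 : (ZMod 2)[X]) = 0 := by
    rw [show (2 : (ZMod 2)[X]) = C 2 from (map_ofNat C 2).symm,
      show (2 : ZMod 2) = 0 from rfl, map_zero]
  have hC : c.map phi4 = 0 := by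
    have h0 := congrArg (Polynomial.map phi4) heq3
    simp only [Polynomial.map_mul, Polynomial.map_ofNat, h20, zero_mul] at h0
    rcases mul_eq_zero.mp h0.symm with h1 | h2
    · exact absurd h1 (mul_ne_zero (mul_ne_zero hF0 hG0) hH0)
    · exact h2
  obtain ⟨c₁, hc₁, _⟩ := halve c hC
  have heq4 : 2 * (f * h * a₁ + f * g * w₁ - f * g * h * c₁) = 0 := by
    rw [hc₁] at heq3
    linear_combination heq3
  have heq5 : f.map phi4 * (h.map phi4 * (a₁.map phi4) + g.map phi4 * (w₁.map phi4)
      - g.map phi4 * h.map phi4 * (c₁.map phi4)) = 0 := by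
    have h2 := two_mul_poly_zero _ heq4
    rw [Polynomial.map_sub, Polynomial.map_add] at h2
    simp only [Polynomial.map_mul] at h2
    linear_combination h2
  have heq6 : h.map phi4 * (a₁.map phi4) + g.map phi4 * (w₁.map phi4)
      - g.map phi4 * h.map phi4 * (c₁.map phi4) = 0 := by
    rcases mul_eq_zero.mp heq5 with h1 | h2
    · exact absurd h1 hF0
    · exact h2
  have hA₁ : a₁.map phi4 = 0 := by
    apply Polynomial.eq_zero_of_dvd_of_degree_lt (p := g.map phi4)
    · apply hcop.dvd_of_dvd_mul_left
      refine ⟨h.map phi4 * (c₁.map phi4) - w₁.map phi4, ?_⟩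
      linear_combination heq6
    · calc (a₁.map phi4).degree ≤ a₁.degree := Polynomial.degree_map_le
        _ ≤ a.degree := ha₁d
        _ < (g.natDegree : WithBot ℕ) := ha
        _ = (g.map phi4).degree := hGdeg.symm
  obtain ⟨a₂, ha₂, _⟩ := halve a₁ hA₁
  have hazero : a = 0 := by
    rw [ha₁, ha₂, ← mul_assoc, four_zero, zero_mul]
  have hW₁ : w₁.map phi4 = 0 := by
    apply Polynomial.eq_zero_of_dvd_of_degree_lt (p := h.map phi4)
    · refine ⟨c₁.map phi4, ?_⟩
      have e : g.map phi4 * (w₁.map phi4) = g.map phi4 * (h.map phi4 * (c₁.map phi4)) := by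
        rw [hA₁] at heq6
        linear_combination heq6
      exact mul_left_cancel₀ hG0 e
    · calc (w₁.map phi4).degree ≤ w₁.degree := Polynomial.degree_map_le
        _ ≤ w.degree := hw₁d
        _ < (h.natDegree : WithBot ℕ) := hw
        _ = (h.map phi4).degree := hHdeg.symm
  obtain ⟨w₂, hw₂, _⟩ := halve w₁ hW₁
  exact ⟨hazero, by rw [hw₁, hw₂, ← mul_assoc, four_zero, zero_mul]⟩

lemma pv_map_zero {d : ℕ} (v : Fin d → ZMod 2) :
    (∑ i : Fin d, C (2 * ((v i).val : ZMod 4)) * X ^ (i : ℕ)).map phi4 = 0 := by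
  rw [Polynomial.map_sum]
  apply Finset.sum_eq_zero
  intro i _
  rw [Polynomial.map_mul, Polynomial.map_C, Polynomial.map_pow, Polynomial.map_X,
    (by decide : ∀ z : ZMod 2, phi4 (2 * ((z.val : ℕ) : ZMod 4)) = 0) (v i), map_zero]
  ring

theorem cyclic_code_card (n : ℕ) (hn : Odd n) (hpos : 0 < n)
    (f g h : Polynomial (ZMod 4)) (hf : f.Monic) (hg : g.Monic) (hh : h.Monic)
    (hfac : f * g * h = X ^ n - 1) :
    Nat.card
      (Ideal.span
        {Ideal.Quotient.mk (Ideal.span {(X ^ n - 1 : Polynomial (ZMod 4))}) (f * h),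
         Ideal.Quotient.mk (Ideal.span {(X ^ n - 1 : Polynomial (ZMod 4))}) (2 * f * g)} :
        Ideal (Polynomial (ZMod 4) ⧸ Ideal.span {(X ^ n - 1 : Polynomial (ZMod 4))})) =
      4 ^ g.natDegree * 2 ^ h.natDegree := by
  classical
  haveI : Nontrivial (ZMod 4) := ⟨0, 1, by decide⟩
  set J : Ideal (Polynomial (ZMod 4)) := Ideal.span {(X ^ n - 1 : Polynomial (ZMod 4))} with hJ
  set I : Ideal (Polynomial (ZMod 4) ⧸ J) :=
    Ideal.span {Ideal.Quotient.mk J (f * h), Ideal.Quotient.mk J (2 * f * g)} with hI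
  set Φ : ((Fin g.natDegree → ZMod 4) × (Fin h.natDegree → ZMod 2)) → (Polynomial (ZMod 4) ⧸ J) :=
    fun p => Ideal.Quotient.mk J (f * h * (∑ i : Fin g.natDegree, C (p.1 i) * X ^ (i : ℕ))
      + f * g * (∑ i : Fin h.natDegree, C (2 * ((p.2 i).val : ZMod 4)) * X ^ (i : ℕ))) with hΦ
  -- injectivity
  have hinj : Function.Injective Φ := by
    rintro ⟨u, v⟩ ⟨u', v'⟩ hpq
    simp only [hΦ] at hpq
    rw [Ideal.Quotient.eq, hJ] at hpq
    obtain ⟨c, hc⟩ := Ideal.mem_span_singleton.mp hpq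
    set a : (ZMod 4)[X] := (∑ i : Fin g.natDegree, C (u i) * X ^ (i : ℕ))
      - (∑ i : Fin g.natDegree, C (u' i) * X ^ (i : ℕ)) with hadef
    set w : (ZMod 4)[X] := (∑ i : Fin h.natDegree, C (2 * ((v i).val : ZMod 4)) * X ^ (i : ℕ))
      - (∑ i : Fin h.natDegree, C (2 * ((v' i).val : ZMod 4)) * X ^ (i : ℕ)) with hwdef
    have ha : a.degree < (g.natDegree : WithBot ℕ) :=
      mem_degreeLT.mp (Submodule.sub_mem _ (finsum_mem_degreeLT _) (finsum_mem_degreeLT _))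
    have hw : w.degree < (h.natDegree : WithBot ℕ) :=
      mem_degreeLT.mp (Submodule.sub_mem _ (finsum_mem_degreeLT _) (finsum_mem_degreeLT _))
    have hwphi : w.map phi4 = 0 := by
      rw [hwdef, Polynomial.map_sub, pv_map_zero, pv_map_zero, sub_zero]
    have heq : f * h * a + f * g * w = (X ^ n - 1) * c := by
      rw [hadef, hwdef, ← hc]; ring
    obtain ⟨ha0, hw0⟩ := key_lemma n hn f g h hf hg hh hfac a w c ha hw hwphi heq
    have hu : u = u' := by
      funext i
      have := congrArg (fun r => Polynomial.coeff r (i : ℕ)) (sub_eq_zero.mp ha0)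
      simp only [coeff_finsum, i.isLt, dif_pos, Fin.eta] at this
      exact this
    have hv : v = v' := by
      funext i
      have := congrArg (fun r => Polynomial.coeff r (i : ℕ)) (sub_eq_zero.mp hw0)
      simp only [coeff_finsum, i.isLt, dif_pos] at this
      exact (by decide : ∀ z z' : ZMod 2,
        2 * ((z.val : ℕ) : ZMod 4) = 2 * ((z'.val : ℕ) : ZMod 4) → z = z') _ _ this
    rw [hu, hv]
  -- range
  have hrange : (I : Set (Polynomial (ZMod 4) ⧸ J)) = Set.range Φ := by
    apply Set.Subset.antisymm
    · intro x hx
      obtain ⟨y, z, hyz⟩ := Ideal.mem_span_pair.mp hx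
      obtain ⟨U, rfl⟩ := Ideal.Quotient.mk_surjective y
      obtain ⟨V, rfl⟩ := Ideal.Quotient.mk_surjective z
      refine ⟨⟨fun i => (U %ₘ g).coeff i, fun i => phi4 ((V %ₘ h).coeff i)⟩, ?_⟩
      have hpu : (∑ i : Fin g.natDegree, C ((U %ₘ g).coeff i) * X ^ (i : ℕ)) = U %ₘ g := by
        ext j
        rw [coeff_finsum]
        split
        · rfl
        · next hj =>
            refine (Polynomial.coeff_eq_zero_of_degree_lt ?_).symm
            calc (U %ₘ g).degree < g.degree := Polynomial.degree_modByMonic_lt U hg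
              _ = (g.natDegree : WithBot ℕ) := Polynomial.degree_eq_natDegree hg.ne_zero
              _ ≤ (j : WithBot ℕ) := by exact_mod_cast Nat.cast_le.mpr (le_of_not_gt hj)
      have hpv : (∑ i : Fin h.natDegree, C (2 * ((phi4 ((V %ₘ h).coeff i)).val : ZMod 4)) * X ^ (i : ℕ))
          = 2 * (V %ₘ h) := by
        ext j
        rw [coeff_finsum, show (2 : (ZMod 4)[X]) = C 2 from (map_ofNat C 2).symm,
          Polynomial.coeff_C_mul]
        split
        · next hj =>
            exact (by decide : ∀ x : ZMod 4, 2 * (((phi4 x).val : ℕ) : ZMod 4) = 2 * x) _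
        · next hj =>
            rw [Polynomial.coeff_eq_zero_of_degree_lt, mul_zero]
            calc (V %ₘ h).degree < h.degree := Polynomial.degree_modByMonic_lt V hh
              _ = (h.natDegree : WithBot ℕ) := Polynomial.degree_eq_natDegree hh.ne_zero
              _ ≤ (j : WithBot ℕ) := by exact_mod_cast Nat.cast_le.mpr (le_of_not_gt hj)
      rw [hΦ]
      simp only [hpu, hpv]
      rw [← hyz, ← map_mul, ← map_mul, ← map_add, Ideal.Quotient.eq, hJ]
      apply Ideal.mem_span_singleton.mpr
      refine ⟨-(U /ₘ g + 2 * (V /ₘ h)), ?_⟩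
      have e1 : U %ₘ g + g * (U /ₘ g) = U := Polynomial.modByMonic_add_div U g
      have e2 : V %ₘ h + h * (V /ₘ h) = V := Polynomial.modByMonic_add_div V h
      linear_combination (f * h) * e1 + (2 * f * g) * e2
        - (U /ₘ g + 2 * (V /ₘ h)) * hfac
    · rintro x ⟨⟨u, v⟩, rfl⟩
      simp only [hΦ]
      have hpv2 : (∑ i : Fin h.natDegree, C (2 * ((v i).val : ZMod 4)) * X ^ (i : ℕ))
          = C 2 * (∑ i : Fin h.natDegree, C (((v i).val : ZMod 4)) * X ^ (i : ℕ)) := by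
        rw [Finset.mul_sum]
        congr 1
        funext i
        rw [← mul_assoc, ← Polynomial.C_mul]
      rw [hpv2, show (C 2 : (ZMod 4)[X]) = 2 from map_ofNat C 2]
      have : f * h * (∑ i : Fin g.natDegree, C (u i) * X ^ (i : ℕ))
          + f * g * (2 * (∑ i : Fin h.natDegree, C (((v i).val : ZMod 4)) * X ^ (i : ℕ)))
          = (∑ i : Fin g.natDegree, C (u i) * X ^ (i : ℕ)) * (f * h)
          + (∑ i : Fin h.natDegree, C (((v i).val : ZMod 4)) * X ^ (i : ℕ)) * (2 * f * g) := by
        ring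
      have m1 : Ideal.Quotient.mk J (f * h) ∈ I := by
        rw [hI]; exact Ideal.subset_span (Set.mem_insert _ _)
      have m2 : Ideal.Quotient.mk J (2 * f * g) ∈ I := by
        rw [hI]; exact Ideal.subset_span (Set.mem_insert_of_mem _ rfl)
      have t1 : (Ideal.Quotient.mk J)
          ((∑ i : Fin g.natDegree, C (u i) * X ^ (i : ℕ)) * (f * h)) ∈ I := by
        rw [map_mul]; exact I.mul_mem_left _ m1
      have t2 : (Ideal.Quotient.mk J)
          ((∑ i : Fin h.natDegree, C (((v i).val : ZMod 4)) * X ^ (i : ℕ)) * (2 * f * g)) ∈ I := by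
        rw [map_mul]; exact I.mul_mem_left _ m2
      rw [SetLike.mem_coe, this, map_add]
      exact I.add_mem t1 t2
  -- count
  calc Nat.card I = Nat.card (Set.range Φ) := Nat.card_congr (Equiv.setCongr hrange)
    _ = Nat.card ((Fin g.natDegree → ZMod 4) × (Fin h.natDegree → ZMod 2)) :=
        Nat.card_range_of_injective hinj
    _ = 4 ^ g.natDegree * 2 ^ h.natDegree := by
        simp [Nat.card_prod, Nat.card_fun, Nat.card_zmod, Nat.card_eq_fintype_card]
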